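/- Let m > 0 be a constant and let θ̄ : [t₀, t₁] → ℝ be differentiable and satisfy θ̄'(t) = −(m cos²θ̄(t) + sin²θ̄(t)) for all t ∈ [t₀, t₁]. Then θ̄(t₁) − θ̄(t₀) ≤ −√m · (t₁ − t₀) + π. -/

import Mathlib

open Real in
private lemma prufer_g_deriv (a : ℝ) (ha : 0 < a) (x : ℝ) :
    HasDerivAt (fun x => Real.arctan ((a - 1) * Real.sin x * Real.cos x /
        (a * Real.cos x ^ 2 + Real.sin x ^ 2)))
      ((a - 1) * (a * Real.cos x ^ 2 - Real.sin x ^ 2) /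
        (a ^ 2 * Real.cos x ^ 2 + Real.sin x ^ 2)) x := by
  have hpyth := Real.sin_sq_add_cos_sq x
  have hD : (0:ℝ) < a * Real.cos x ^ 2 + Real.sin x ^ 2 := by
    nlinarith [sq_nonneg (Real.sin x), sq_nonneg (Real.cos x),
      mul_nonneg ha.le (sq_nonneg (Real.cos x))]
  have hD2 : (0:ℝ) < a ^ 2 * Real.cos x ^ 2 + Real.sin x ^ 2 := by
    nlinarith [sq_nonneg (Real.sin x), sq_nonneg (Real.cos x),
      mul_nonneg (mul_pos ha ha).le (sq_nonneg (Real.cos x))]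
  have hN : HasDerivAt (fun x => (a - 1) * Real.sin x * Real.cos x)
      ((a - 1) * (Real.cos x ^ 2 - Real.sin x ^ 2)) x := by
    have := ((Real.hasDerivAt_sin x).const_mul (a - 1)).mul (Real.hasDerivAt_cos x)
    refine this.congr_deriv (Eq.symm ?_); ring
  have hDd : HasDerivAt (fun x => a * Real.cos x ^ 2 + Real.sin x ^ 2)
      (2 * (1 - a) * Real.sin x * Real.cos x) x := by
    have h1 := (((Real.hasDerivAt_cos x).pow 2).const_mul a).add ((Real.hasDerivAt_sin x).pow 2)
    refine h1.congr_deriv (Eq.symm ?_); ring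
  have hq := (hN.div hDd hD.ne').arctan
  refine hq.congr_deriv (Eq.symm ?_)
  have h1 : (1 + ((a - 1) * Real.sin x * Real.cos x /
      (a * Real.cos x ^ 2 + Real.sin x ^ 2)) ^ 2) ≠ 0 := by
    positivity
  have key1 : (a * Real.cos x ^ 2 + Real.sin x ^ 2) ^ 2 + ((a - 1) * Real.sin x * Real.cos x) ^ 2
      = a ^ 2 * Real.cos x ^ 2 + Real.sin x ^ 2 := by
    linear_combination (a ^ 2 * Real.cos x ^ 2 + Real.sin x ^ 2) * hpyth
  have key2 : (a - 1) * (Real.cos x ^ 2 - Real.sin x ^ 2) * (a * Real.cos x ^ 2 + Real.sin x ^ 2) -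
      (a - 1) * Real.sin x * Real.cos x * (2 * (1 - a) * Real.sin x * Real.cos x)
      = (a - 1) * (a * Real.cos x ^ 2 - Real.sin x ^ 2) := by
    linear_combination (a - 1) * (a * Real.cos x ^ 2 - Real.sin x ^ 2) * hpyth
  simp only [Pi.div_apply]
  rw [div_pow, one_add_div (pow_ne_zero 2 hD.ne'), one_div_div, key1, key2]
  field_simp

/-- A solution of the phase-angle equation
`θ̄' = -(m cos²θ̄ + sin²θ̄)` on `[t₀, t₁]` satisfies
`θ̄(t₁) - θ̄(t₀) ≤ -√m (t₁ - t₀) + π`. -/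
theorem phase_angle_comparison (m t₀ t₁ : ℝ) (hm : 0 < m) (ht : t₀ ≤ t₁) (θ : ℝ → ℝ)
    (hθ : ∀ t ∈ Set.Icc t₀ t₁,
      HasDerivAt θ (-(m * Real.cos (θ t) ^ 2 + Real.sin (θ t) ^ 2)) t) :
    θ t₁ - θ t₀ ≤ -Real.sqrt m * (t₁ - t₀) + Real.pi := by
  set a := Real.sqrt m with ha_def
  have ha : 0 < a := Real.sqrt_pos.2 hm
  have ha2 : a ^ 2 = m := Real.sq_sqrt hm.le
  set g : ℝ → ℝ := fun x => Real.arctan ((a - 1) * Real.sin x * Real.cos x /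
      (a * Real.cos x ^ 2 + Real.sin x ^ 2)) with hg_def
  -- F t = θ t - g (θ t) + a * t has zero derivative on [t₀, t₁]
  set F : ℝ → ℝ := fun t => θ t - g (θ t) + a * t with hF_def
  have hF' : ∀ t ∈ Set.Icc t₀ t₁, HasDerivAt F 0 t := by
    intro t htmem
    have hθt := hθ t htmem
    have hg' := (prufer_g_deriv a ha (θ t)).comp t hθt
    have hD2 : (0:ℝ) < a ^ 2 * Real.cos (θ t) ^ 2 + Real.sin (θ t) ^ 2 := by
      nlinarith [Real.sin_sq_add_cos_sq (θ t), sq_nonneg (Real.sin (θ t)),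
        sq_nonneg (Real.cos (θ t)), mul_nonneg (mul_pos ha ha).le (sq_nonneg (Real.cos (θ t)))]
    have := (hθt.sub hg').add ((hasDerivAt_id t).const_mul a)
    refine this.congr_deriv (Eq.symm ?_)
    rw [← ha2]
    field_simp
    linear_combination a *
      Real.sin_sq_add_cos_sq (θ t)
  have hFeq : F t₁ = F t₀ := by
    rcases eq_or_lt_of_le ht with h | h
    · rw [h]
    · have hcont : ContinuousOn F (Set.Icc t₀ t₁) := fun t htmem =>
        (hF' t htmem).continuousAt.continuousWithinAt
      obtain ⟨c, hc, hceq⟩ := exists_hasDerivAt_eq_slope F (fun _ => (0:ℝ)) h hcont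
        (fun x hx => hF' x (Set.mem_Icc.2 ⟨hx.1.le, hx.2.le⟩))
      have : F t₁ - F t₀ = 0 := by
        rcases div_eq_zero_iff.mp hceq.symm with h0 | h0
        · exact h0
        · exact absurd h0 (sub_ne_zero.2 h.ne')
      linarith
  have hg1 : g (θ t₁) < Real.pi / 2 := Real.arctan_lt_pi_div_two _
  have hg0 : -(Real.pi / 2) < g (θ t₀) := Real.neg_pi_div_two_lt_arctan _
  have : θ t₁ - g (θ t₁) + a * t₁ = θ t₀ - g (θ t₀) + a * t₀ := hFeq
  linarith
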